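/- (Wigner transform of a Töplitz quantization is a Gaussian mollification.) Let ħ > 0 and let f ∈ L¹(ℝ⁶) ∩ L^∞(ℝ⁶) be real-valued. Define the kernel K_ħ(x,x′) = (2πħ)^{−3} ∫∫_{ℝ³×ℝ³} f(q′,p′) φ^ħ_{(q′,p′)}(x) · conj( φ^ħ_{(q′,p′)}(x′) ) dq′ dp′ for x, x′ ∈ ℝ³. Then for every (q,p) ∈ ℝ³×ℝ³, ∫_{ℝ³} K_ħ(q + y/2, q − y/2) e^{−i p·y/ħ} dy = (G^6_{ħ/2} * f)(q,p), where G^6_a(z) = (2πa)^{−3} e^{−|z|²/(2a)} is the centered Gaussian density on ℝ⁶ with covariance a·I and * is convolution on ℝ⁶. -/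

import Mathlib

open MeasureTheory Real Filter

noncomputable section

abbrev E3 := EuclideanSpace ℝ (Fin 3)

/-- The coherent state `φ^ħ_{(q,p)}(x) = (πħ)^{-3/4} e^{-|x-q|²/(2ħ)} e^{i p·x/ħ}`. -/
def coherent (hb : ℝ) (q p : E3) (x : E3) : ℂ :=
  (((π * hb) ^ (-(3 : ℝ) / 4) : ℝ) : ℂ) *
    Complex.exp (((-(‖x - q‖ ^ 2) / (2 * hb) : ℝ) : ℂ)) *
    Complex.exp (Complex.I * ((@inner ℝ _ _ p x : ℝ) : ℂ) / (hb : ℂ))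

/-- `L²(ℝ³; ℂ)`. -/
abbrev H2 := Lp ℂ 2 (volume : Measure E3)

/-- `T` is the Töplitz quantization `Op^T_ħ[f]`, characterized weakly by
`⟨ψ₁, T ψ₂⟩ = (2πħ)^{-3} ∫ f(q,p) ⟨ψ₁, φ^ħ_{(q,p)}⟩ ⟨φ^ħ_{(q,p)}, ψ₂⟩ dq dp`. -/
def IsToplitz (hb : ℝ) (f : E3 × E3 → ℝ) (T : H2 →L[ℂ] H2) : Prop :=
  ∀ ψ₁ ψ₂ : H2, (@inner ℂ _ _ ψ₁ (T ψ₂)) =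
    (((2 * π * hb) ^ (3 : ℕ) : ℝ) : ℂ)⁻¹ *
      ∫ z : E3 × E3, (f z : ℂ) *
        ((∫ x : E3, (starRingEnd ℂ) (ψ₁ x) * coherent hb z.1 z.2 x) *
          (∫ x : E3, (starRingEnd ℂ) (coherent hb z.1 z.2 x) * ψ₂ x))

/-- The integral kernel `K_ħ(x,x') = (2πħ)^{-3} ∫∫ f(q',p') φ^ħ_{(q',p')}(x)
conj(φ^ħ_{(q',p')}(x')) dq' dp'` of the Töplitz quantization of `f`. -/
def toplitzKernel (hb : ℝ) (f : E3 × E3 → ℝ) (x x' : E3) : ℂ :=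
  (((2 * π * hb) ^ (3 : ℕ) : ℝ) : ℂ)⁻¹ *
    ∫ z : E3 × E3, (f z : ℂ) * coherent hb z.1 z.2 x *
      (starRingEnd ℂ) (coherent hb z.1 z.2 x')

open scoped RealInnerProductSpace

lemma gauss_int (hb : ℝ) (hhb : 0 < hb) (w : E3) :
    ∫ y : E3, Complex.exp (-(((4*hb)⁻¹ : ℝ) : ℂ) * ‖y‖^2 + (Complex.I / (hb:ℂ)) * ⟪w, y⟫) =
      (((4*π*hb)^((3:ℝ)/2) * Real.exp (-‖w‖^2/hb) : ℝ) : ℂ) := by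
  have hbre : (0:ℝ) < ((((4*hb)⁻¹ : ℝ) : ℂ)).re := by simp; positivity
  rw [GaussianFourier.integral_cexp_neg_mul_sq_norm_add hbre (Complex.I / (hb:ℂ)) w]
  rw [finrank_euclideanSpace_fin]
  have h1 : ((π:ℂ) / (((4*hb)⁻¹ : ℝ) : ℂ)) = (((4*π*hb : ℝ)):ℂ) := by
    push_cast
    field_simp
  have h2 : (Complex.I / (hb:ℂ))^2 * (‖w‖:ℂ)^2 / (4 * (((4*hb)⁻¹ : ℝ) : ℂ)) =
      ((-‖w‖^2/hb : ℝ) : ℂ) := by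
    have : (hb:ℂ) ≠ 0 := by exact_mod_cast hhb.ne'
    push_cast
    rw [div_pow, Complex.I_sq]
    field_simp
  rw [h1, h2]
  rw [show ((3:ℕ) / 2 : ℂ) = (((3:ℝ)/2 : ℝ) : ℂ) by push_cast; ring]
  rw [← Complex.ofReal_cpow (by positivity), ← Complex.ofReal_exp]
  push_cast
  ring

lemma gauss_integrable (hb : ℝ) (hhb : 0 < hb) (w : E3) :
    Integrable (fun y : E3 => Complex.exp (-(((4*hb)⁻¹ : ℝ) : ℂ) * ‖y‖^2 +
      (Complex.I / (hb:ℂ)) * ⟪w, y⟫)) := by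
  have hbre : (0:ℝ) < ((((4*hb)⁻¹ : ℝ) : ℂ)).re := by simp; positivity
  exact GaussianFourier.integrable_cexp_neg_mul_sq_norm_add hbre (Complex.I / (hb:ℂ)) w

lemma exp_re_eq (hb : ℝ) (w y : E3) :
    (-(((4*hb)⁻¹ : ℝ) : ℂ) * ‖y‖^2 + (Complex.I / (hb:ℂ)) * ⟪w, y⟫).re
      = -((4*hb)⁻¹ * ‖y‖^2) := by
  have h0 : (-(((4*hb)⁻¹ : ℝ) : ℂ) * ‖y‖^2 + (Complex.I / (hb:ℂ)) * ⟪w, y⟫)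
      = ((-((4*hb)⁻¹ * ‖y‖^2) : ℝ) : ℂ) + (((⟪w,y⟫ / hb : ℝ)) : ℂ) * Complex.I := by
    push_cast; ring
  rw [h0, Complex.add_re, Complex.ofReal_re, Complex.mul_I_re, Complex.ofReal_im]
  ring

lemma Gfun_integrable (hb : ℝ) (hhb : 0 < hb) (f : E3 × E3 → ℝ) (hfmeas : Measurable f)
    (hf1 : Integrable f) (q p : E3) :
    Integrable (Function.uncurry fun (y : E3) (z : E3 × E3) =>
      (f z : ℂ) * ((((π*hb)^(-(3:ℝ)/2) * Real.exp (-‖q - z.1‖^2 / hb) : ℝ)) : ℂ) *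
        Complex.exp (-(((4*hb)⁻¹:ℝ):ℂ) * ‖y‖^2 + (Complex.I/(hb:ℂ)) * ⟪z.2 - p, y⟫))
      (volume.prod volume) := by
  set A : ℝ := (π*hb)^(-(3:ℝ)/2) with hA
  have hA0 : 0 < A := by positivity
  have hφ : Integrable (fun y : E3 => Real.exp (-((4*hb)⁻¹ * ‖y‖^2))) := by
    refine ((gauss_integrable hb hhb 0).norm).congr (Eventually.of_forall fun y => ?_)
    simp only [Complex.norm_exp, exp_re_eq]
  have hψ : Integrable (fun z : E3 × E3 => A * |f z|) := (hf1.abs.const_mul A)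
  have hB : Integrable (fun w : E3 × (E3 × E3) =>
      Real.exp (-((4*hb)⁻¹ * ‖w.1‖^2)) * (A * |f w.2|)) (volume.prod volume) :=
    hφ.mul_prod hψ
  refine hB.mono' ?_ (Eventually.of_forall fun w => ?_)
  · apply Measurable.aestronglyMeasurable
    apply Measurable.mul
    apply Measurable.mul
    · exact Complex.measurable_ofReal.comp (hfmeas.comp measurable_snd)
    · have : Continuous fun w : E3 × (E3 × E3) =>
        (((A * Real.exp (-‖q - w.2.1‖^2 / hb) : ℝ)) : ℂ) := by fun_prop
      exact this.measurable
    · have : Continuous fun w : E3 × (E3 × E3) =>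
        Complex.exp (-(((4*hb)⁻¹:ℝ):ℂ) * ‖w.1‖^2 +
          (Complex.I/(hb:ℂ)) * ((⟪w.2.2 - p, w.1⟫ : ℝ) : ℂ)) := by
        apply Complex.continuous_exp.comp
        apply Continuous.add
        · fun_prop
        · apply Continuous.mul continuous_const
          exact Complex.continuous_ofReal.comp
            ((continuous_snd.snd.sub continuous_const).inner continuous_fst)
      exact this.measurable
  · obtain ⟨y, z⟩ := w
    simp only [Function.uncurry_apply_pair, norm_mul,
      Complex.norm_exp, exp_re_eq]
    rw [Complex.norm_real, Complex.norm_real, Real.norm_eq_abs, Real.norm_eq_abs]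
    have h1 : |(π*hb)^(-(3:ℝ)/2) * Real.exp (-‖q - z.1‖^2 / hb)| ≤ A := by
      rw [abs_of_nonneg (by positivity)]
      have hle : Real.exp (-‖q - z.1‖^2 / hb) ≤ 1 :=
        Real.exp_le_one_iff.2
          (div_nonpos_of_nonpos_of_nonneg (neg_nonpos.2 (sq_nonneg _)) hhb.le)
      exact mul_le_of_le_one_right hA0.le hle
    have h2 : (0:ℝ) ≤ Real.exp (-((4*hb)⁻¹ * ‖y‖^2)) := (Real.exp_pos _).le
    calc |(f z)| * |(π*hb)^(-(3:ℝ)/2) * Real.exp (-‖q - z.1‖^2 / hb)| *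
          Real.exp (-((4*hb)⁻¹ * ‖y‖^2))
        ≤ |(f z)| * A * Real.exp (-((4*hb)⁻¹ * ‖y‖^2)) := by
          gcongr
      _ = Real.exp (-((4*hb)⁻¹ * ‖y‖^2)) * (A * |f z|) := by ring

lemma coherent_mul_conj (hb : ℝ) (hhb : 0 < hb) (a b x x' : E3) :
    coherent hb a b x * (starRingEnd ℂ) (coherent hb a b x') =
      ((((π * hb) ^ (-(3:ℝ)/2) : ℝ)) : ℂ) *
        Complex.exp (((-(‖x - a‖ ^ 2) / (2 * hb) + -(‖x' - a‖ ^ 2) / (2 * hb) : ℝ) : ℂ)) *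
        Complex.exp (Complex.I * ((⟪b, x⟫ - ⟪b, x'⟫ : ℝ) : ℂ) / hb) := by
  have hπ : (0:ℝ) < π * hb := by positivity
  have hC : ((π * hb) ^ (-(3:ℝ)/4)) * ((π * hb) ^ (-(3:ℝ)/4)) = (π * hb) ^ (-(3:ℝ)/2) := by
    rw [← Real.rpow_add hπ]; norm_num
  simp only [coherent, map_mul, Complex.conj_ofReal, ← Complex.exp_conj, map_div₀, Complex.conj_I]
  rw [← hC]
  push_cast
  rw [Complex.exp_add]
  simp only [mul_sub, sub_div, Complex.exp_sub, Complex.exp_neg]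
  ring_nf
  simp [Complex.exp_neg]

lemma coherent_pt (hb : ℝ) (hhb : 0 < hb) (q p : E3) (z : E3 × E3) (y : E3) :
    coherent hb z.1 z.2 (q + (1/2:ℝ) • y) * (starRingEnd ℂ) (coherent hb z.1 z.2 (q - (1/2:ℝ) • y)) *
      Complex.exp (-Complex.I * ((⟪p, y⟫ : ℝ) : ℂ) / (hb:ℂ)) =
    (((π * hb) ^ (-(3:ℝ)/2) * Real.exp (-‖q - z.1‖^2 / hb) : ℝ) : ℂ) *
      Complex.exp (-(((4*hb)⁻¹ : ℝ) : ℂ) * ‖y‖^2 + (Complex.I / (hb:ℂ)) * ⟪z.2 - p, y⟫) := by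
  have hbne : hb ≠ 0 := hhb.ne'
  rw [coherent_mul_conj hb hhb]
  have e1 : (q + (1/2:ℝ) • y) - z.1 = (q - z.1) + (1/2:ℝ) • y := by module
  have e2 : (q - (1/2:ℝ) • y) - z.1 = (q - z.1) - (1/2:ℝ) • y := by module
  have h1 : (-(‖(q + (1/2:ℝ) • y) - z.1‖ ^ 2) / (2 * hb) + -(‖(q - (1/2:ℝ) • y) - z.1‖ ^ 2) / (2 * hb) : ℝ)
      = -‖q - z.1‖^2 / hb + -((4*hb)⁻¹ * ‖y‖^2) := by
    rw [e1, e2, norm_add_sq_real (q - z.1) ((1/2:ℝ) • y),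
      norm_sub_sq_real (q - z.1) ((1/2:ℝ) • y), norm_smul]
    simp only [Real.norm_eq_abs]
    rw [abs_of_pos (by norm_num : (0:ℝ) < 1/2)]
    field_simp
    ring
  have h2 : (⟪z.2, q + (1/2:ℝ) • y⟫ - ⟪z.2, q - (1/2:ℝ) • y⟫ : ℝ) = ⟪z.2 - p, y⟫ + ⟪p, y⟫ := by
    rw [← inner_sub_right, show (q + (1/2:ℝ) • y) - (q - (1/2:ℝ) • y) = y from by module,
      inner_sub_left]
    ring
  rw [h1, h2]
  simp only [Complex.ofReal_add, Complex.ofReal_mul, Complex.ofReal_neg, Complex.ofReal_sub,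
    Complex.ofReal_div, Complex.ofReal_inv, Complex.ofReal_pow, Complex.ofReal_ofNat,
    Complex.ofReal_exp, mul_add, add_div, Complex.exp_add]
  ring_nf
  simp only [Complex.exp_neg]
  ring_nf
  exact mul_inv_cancel_right₀ (Complex.exp_ne_zero _) _

lemma const_eq (hb : ℝ) (hhb : 0 < hb) :
    (((2*π*hb)^(3:ℕ) : ℝ))⁻¹ * ((π*hb)^(-(3:ℝ)/2) * (4*π*hb)^((3:ℝ)/2))
      = (2*π*(hb/2))^(-(3:ℝ)) := by
  have hπ : (0:ℝ) < π * hb := by positivity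
  have h8 : (4:ℝ)^((3:ℝ)/2) = 8 := by
    rw [show (4:ℝ) = 2^(2:ℕ) by norm_num, ← Real.rpow_natCast 2 2,
      ← Real.rpow_mul (by norm_num : (0:ℝ) ≤ 2)]
    rw [show ((2:ℕ):ℝ) * ((3:ℝ)/2) = ((3:ℕ):ℝ) by norm_num, Real.rpow_natCast]
    norm_num
  have h4 : (4*π*hb : ℝ)^((3:ℝ)/2) = 8 * (π*hb)^((3:ℝ)/2) := by
    rw [show (4*π*hb:ℝ) = 4*(π*hb) by ring, Real.mul_rpow (by norm_num) hπ.le, h8]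
  have hmix : (π*hb)^(-(3:ℝ)/2) * (π*hb)^((3:ℝ)/2) = 1 := by
    rw [← Real.rpow_add hπ]; norm_num
  have hr : (2*π*(hb/2) : ℝ)^(-(3:ℝ)) = ((π*hb)^(3:ℕ))⁻¹ := by
    rw [show (2*π*(hb/2) : ℝ) = π*hb by ring, Real.rpow_neg hπ.le,
      show (3:ℝ) = ((3:ℕ):ℝ) by norm_num, Real.rpow_natCast]
  rw [hr, h4]
  calc (((2*π*hb)^(3:ℕ) : ℝ))⁻¹ * ((π*hb)^(-(3:ℝ)/2) * (8 * (π*hb)^((3:ℝ)/2)))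
      = (((2*π*hb)^(3:ℕ) : ℝ))⁻¹ * 8 * ((π*hb)^(-(3:ℝ)/2) * (π*hb)^((3:ℝ)/2)) := by ring
    _ = (((2*π*hb)^(3:ℕ) : ℝ))⁻¹ * 8 := by rw [hmix, mul_one]
    _ = ((π*hb)^(3:ℕ))⁻¹ := by
        rw [show ((2*π*hb):ℝ)^(3:ℕ) = 8 * (π*hb)^(3:ℕ) by ring]
        field_simp

lemma real_side (hb : ℝ) (hhb : 0 < hb) (f : E3 × E3 → ℝ) (q p : E3) :
    (((2*π*hb)^(3:ℕ) : ℝ))⁻¹ * ∫ z : E3 × E3,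
        f z * ((π*hb)^(-(3:ℝ)/2) * Real.exp (-‖q - z.1‖^2/hb) *
          ((4*π*hb)^((3:ℝ)/2) * Real.exp (-‖z.2 - p‖^2/hb)))
      = ∫ w : E3 × E3, (2*π*(hb/2))^(-(3:ℝ)) *
          Real.exp (-(‖q - w.1‖^2 + ‖p - w.2‖^2)/(2*(hb/2))) * f w := by
  have hbne : hb ≠ 0 := hhb.ne'
  rw [← integral_const_mul]
  refine integral_congr_ae (Eventually.of_forall fun z => ?_)
  beta_reduce
  have hexp : Real.exp (-(‖q - z.1‖^2 + ‖p - z.2‖^2)/(2*(hb/2)))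
      = Real.exp (-‖q - z.1‖^2/hb) * Real.exp (-‖z.2 - p‖^2/hb) := by
    rw [← Real.exp_add, norm_sub_rev z.2 p]
    congr 1
    field_simp
    ring
  rw [hexp, ← const_eq hb hhb]
  ring

/-- The Wigner transform of the Töplitz quantization of `f` is the Gaussian mollification
`G^6_{ħ/2} * f`: for all `(q,p)`,
`∫ K_ħ(q + y/2, q - y/2) e^{-i p·y/ħ} dy = (G^6_{ħ/2} * f)(q,p)`, where
`G^6_a(z) = (2πa)^{-3} e^{-|z|²/(2a)}` is the centered Gaussian density on `ℝ⁶` with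
covariance `a·I`. -/
theorem wigner_of_toplitz (hb : ℝ) (hhb : 0 < hb) (f : E3 × E3 → ℝ)
    (hfmeas : Measurable f) (hf1 : Integrable f) (hfinf : MemLp f ⊤) (q p : E3) :
    (∫ y : E3, toplitzKernel hb f (q + (1 / 2 : ℝ) • y) (q - (1 / 2 : ℝ) • y) *
        Complex.exp (-Complex.I * ((@inner ℝ _ _ p y : ℝ) : ℂ) / (hb : ℂ))) =
      ((∫ w : E3 × E3, (2 * π * (hb / 2)) ^ (-(3 : ℝ)) *
          Real.exp (-(‖q - w.1‖ ^ 2 + ‖p - w.2‖ ^ 2) / (2 * (hb / 2))) * f w : ℝ) : ℂ) := by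
  have hπ : (0:ℝ) < π * hb := by positivity
  have step1 : ∀ y : E3, toplitzKernel hb f (q + (1/2:ℝ) • y) (q - (1/2:ℝ) • y) *
      Complex.exp (-Complex.I * ((⟪p, y⟫ : ℝ) : ℂ) / (hb:ℂ)) =
      ((((2*π*hb)^(3:ℕ) : ℝ)) : ℂ)⁻¹ * ∫ z : E3 × E3,
        (f z : ℂ) * ((((π*hb)^(-(3:ℝ)/2) * Real.exp (-‖q - z.1‖^2/hb) : ℝ)) : ℂ) *
          Complex.exp (-(((4*hb)⁻¹:ℝ):ℂ) * ‖y‖^2 + (Complex.I/(hb:ℂ)) * ⟪z.2 - p, y⟫) := by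
    intro y
    simp only [toplitzKernel]
    rw [mul_assoc, ← integral_mul_const]
    congr 1
    refine integral_congr_ae (Eventually.of_forall fun z => ?_)
    have h := coherent_pt hb hhb q p z y
    calc (f z : ℂ) * coherent hb z.1 z.2 (q + (1/2:ℝ) • y) *
          (starRingEnd ℂ) (coherent hb z.1 z.2 (q - (1/2:ℝ) • y)) *
          Complex.exp (-Complex.I * ((⟪p, y⟫ : ℝ) : ℂ) / (hb:ℂ))
        = (f z : ℂ) * (coherent hb z.1 z.2 (q + (1/2:ℝ) • y) *
            (starRingEnd ℂ) (coherent hb z.1 z.2 (q - (1/2:ℝ) • y)) *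
            Complex.exp (-Complex.I * ((⟪p, y⟫ : ℝ) : ℂ) / (hb:ℂ))) := by ring
      _ = _ := by rw [h]; ring
  rw [integral_congr_ae (Eventually.of_forall step1), integral_const_mul]
  rw [integral_integral_swap (Gfun_integrable hb hhb f hfmeas hf1 q p)]
  have step2 : ∀ z : E3 × E3, (∫ y : E3,
      (f z : ℂ) * ((((π*hb)^(-(3:ℝ)/2) * Real.exp (-‖q - z.1‖^2/hb) : ℝ)) : ℂ) *
        Complex.exp (-(((4*hb)⁻¹:ℝ):ℂ) * ‖y‖^2 + (Complex.I/(hb:ℂ)) * ⟪z.2 - p, y⟫))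
      = ((f z * ((π*hb)^(-(3:ℝ)/2) * Real.exp (-‖q - z.1‖^2/hb) *
          ((4*π*hb)^((3:ℝ)/2) * Real.exp (-‖z.2 - p‖^2/hb))) : ℝ) : ℂ) := by
    intro z
    rw [integral_const_mul, gauss_int hb hhb (z.2 - p)]
    push_cast
    ring
  rw [integral_congr_ae (Eventually.of_forall step2)]
  have hio : (∫ z : E3 × E3, ((f z * ((π*hb)^(-(3:ℝ)/2) * Real.exp (-‖q - z.1‖^2/hb) *
          ((4*π*hb)^((3:ℝ)/2) * Real.exp (-‖z.2 - p‖^2/hb))) : ℝ) : ℂ))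
      = (((∫ z : E3 × E3, f z * ((π*hb)^(-(3:ℝ)/2) * Real.exp (-‖q - z.1‖^2/hb) *
          ((4*π*hb)^((3:ℝ)/2) * Real.exp (-‖z.2 - p‖^2/hb))) : ℝ)) : ℂ) := integral_ofReal
  rw [hio,
    show ((((2*π*hb)^(3:ℕ) : ℝ)) : ℂ)⁻¹ = (((((2*π*hb)^(3:ℕ) : ℝ))⁻¹ : ℝ) : ℂ) by push_cast; ring,
    ← Complex.ofReal_mul, real_side hb hhb f q p]


end
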